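/- (Proposition 1, existence/uniqueness of the General Q(λ) fixed point.) For policies π and μ and λ ∈ [0,1), the operator R Q := ∑_{t≥0} (λγ)^t (P^μ)^t [ r + (1−λ) γ P^π Q ] satisfies ‖R Q₁ − R Q₂‖ ≤ [(1−λ)γ/(1−λγ)] ‖Q₁ − Q₂‖ with (1−λ)γ/(1−λγ) < 1; hence R has a unique fixed point Q^{μ,π}, which is the unique Q-function satisfying Q^{μ,π} − λγ P^μ Q^{μ,π} − (1−λ)γ P^π Q^{μ,π} = r. -/

import Mathlib

open scoped BigOperators

noncomputable section

/-- The operator `P^π` on Q-functions. -/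
def Pop {X A : Type*} [Fintype X] [Fintype A] (P : X → A → X → ℝ) (π : X → A → ℝ)
    (Q : X × A → ℝ) : X × A → ℝ :=
  fun p => ∑ y : X, ∑ b : A, P p.1 p.2 y * π y b * Q (y, b)

/-- The Bellman operator `T^π Q = r + γ P^π Q`. -/
def Tpol {X A : Type*} [Fintype X] [Fintype A] (P : X → A → X → ℝ) (π : X → A → ℝ)
    (γ : ℝ) (r : X × A → ℝ) (Q : X × A → ℝ) : X × A → ℝ :=
  r + γ • Pop P π Q

/-- The General Q(λ) operator `R Q = ∑_{t≥0} (λγ)^t (P^μ)^t [ r + (1−λ) γ P^π Q ]`. -/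
def Rgen {X A : Type*} [Fintype X] [Fintype A] (P : X → A → X → ℝ) (π μ : X → A → ℝ)
    (γ lam : ℝ) (r : X × A → ℝ) (Q : X × A → ℝ) : X × A → ℝ :=
  ∑' t : ℕ, (lam * γ) ^ t • (Pop P μ)^[t] (r + ((1 - lam) * γ) • Pop P π Q)

/- auxiliary lemmas -/
section aux
variable {X A : Type*} [Fintype X] [Fintype A]

/-- `Pop` as a linear map. -/
def PopL (P : X → A → X → ℝ) (π : X → A → ℝ) : (X × A → ℝ) →ₗ[ℝ] (X × A → ℝ) where
  toFun := Pop P π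
  map_add' Q₁ Q₂ := by
    funext p
    simp only [Pop, Pi.add_apply, mul_add, Finset.sum_add_distrib]
  map_smul' c Q := by
    funext p
    simp only [Pop, Pi.smul_apply, smul_eq_mul, RingHom.id_apply, Finset.mul_sum]
    exact Finset.sum_congr rfl fun y _ => Finset.sum_congr rfl fun b _ => by ring

lemma Pop_sub (P : X → A → X → ℝ) (π : X → A → ℝ) (Q₁ Q₂ : X × A → ℝ) :
    Pop P π (Q₁ - Q₂) = Pop P π Q₁ - Pop P π Q₂ :=
  map_sub (PopL P π) Q₁ Q₂

lemma Pop_smul (P : X → A → X → ℝ) (π : X → A → ℝ) (c : ℝ) (Q : X × A → ℝ) :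
    Pop P π (c • Q) = c • Pop P π Q :=
  map_smul (PopL P π) c Q

lemma Pop_norm_le [Nonempty X] [Nonempty A] (P : X → A → X → ℝ)
    (hP0 : ∀ x a y, 0 ≤ P x a y) (hP1 : ∀ x a, ∑ y : X, P x a y = 1)
    (π : X → A → ℝ) (hπ0 : ∀ x a, 0 ≤ π x a) (hπ1 : ∀ x, ∑ a : A, π x a = 1)
    (Q : X × A → ℝ) : ‖Pop P π Q‖ ≤ ‖Q‖ := by
  rw [pi_norm_le_iff_of_nonneg (norm_nonneg Q)]
  intro p
  calc ‖∑ y : X, ∑ b : A, P p.1 p.2 y * π y b * Q (y, b)‖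
      ≤ ∑ y : X, ‖∑ b : A, P p.1 p.2 y * π y b * Q (y, b)‖ := norm_sum_le _ _
    _ ≤ ∑ y : X, ∑ b : A, ‖P p.1 p.2 y * π y b * Q (y, b)‖ :=
        Finset.sum_le_sum fun y _ => norm_sum_le _ _
    _ ≤ ∑ y : X, ∑ b : A, P p.1 p.2 y * π y b * ‖Q‖ := by
        refine Finset.sum_le_sum fun y _ => Finset.sum_le_sum fun b _ => ?_
        rw [norm_mul, norm_mul, Real.norm_of_nonneg (hP0 _ _ _), Real.norm_of_nonneg (hπ0 _ _)]
        exact mul_le_mul_of_nonneg_left (norm_le_pi_norm Q (y, b))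
          (mul_nonneg (hP0 _ _ _) (hπ0 _ _))
    _ = ‖Q‖ := by
        have h1 : ∀ y : X, ∑ b : A, P p.1 p.2 y * π y b * ‖Q‖ = P p.1 p.2 y * ‖Q‖ := by
          intro y
          calc ∑ b : A, P p.1 p.2 y * π y b * ‖Q‖
              = (P p.1 p.2 y * ‖Q‖) * ∑ b : A, π y b := by
                rw [Finset.mul_sum]
                exact Finset.sum_congr rfl fun b _ => by ring
            _ = P p.1 p.2 y * ‖Q‖ := by rw [hπ1]; ring
        simp only [h1, ← Finset.sum_mul, hP1, one_mul]

lemma Pop_iter_norm_le [Nonempty X] [Nonempty A] (P : X → A → X → ℝ)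
    (hP0 : ∀ x a y, 0 ≤ P x a y) (hP1 : ∀ x a, ∑ y : X, P x a y = 1)
    (π : X → A → ℝ) (hπ0 : ∀ x a, 0 ≤ π x a) (hπ1 : ∀ x, ∑ a : A, π x a = 1)
    (t : ℕ) (Q : X × A → ℝ) : ‖(Pop P π)^[t] Q‖ ≤ ‖Q‖ := by
  induction t with
  | zero => simp
  | succ n ih =>
    rw [Function.iterate_succ_apply']
    exact (Pop_norm_le P hP0 hP1 π hπ0 hπ1 _).trans ih

lemma Pop_iter_sub (P : X → A → X → ℝ) (π : X → A → ℝ) (t : ℕ) (Q₁ Q₂ : X × A → ℝ) :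
    (Pop P π)^[t] (Q₁ - Q₂) = (Pop P π)^[t] Q₁ - (Pop P π)^[t] Q₂ := by
  induction t with
  | zero => simp
  | succ n ih => simp only [Function.iterate_succ_apply', ih, Pop_sub]

end aux

/-- Proposition 1, existence/uniqueness: `R` is a contraction with
coefficient `(1−λ)γ/(1−λγ) < 1`, hence has a unique fixed point `Q^{μ,π}`, which is the
unique Q-function satisfying `Q − λγ P^μ Q − (1−λ)γ P^π Q = r`. -/
theorem stmt17 {X A : Type*} [Fintype X] [Fintype A] [Nonempty X] [Nonempty A]
    (P : X → A → X → ℝ)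
    (hP0 : ∀ x a y, 0 ≤ P x a y) (hP1 : ∀ x a, ∑ y : X, P x a y = 1)
    (π μ : X → A → ℝ)
    (hπ0 : ∀ x a, 0 ≤ π x a) (hπ1 : ∀ x, ∑ a : A, π x a = 1)
    (hμ0 : ∀ x a, 0 ≤ μ x a) (hμ1 : ∀ x, ∑ a : A, μ x a = 1)
    (γ : ℝ) (hγ0 : 0 ≤ γ) (hγ1 : γ < 1)
    (lam : ℝ) (hl0 : 0 ≤ lam) (hl1 : lam < 1)
    (r : X × A → ℝ) :
    (∀ Q₁ Q₂ : X × A → ℝ,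
      ‖Rgen P π μ γ lam r Q₁ - Rgen P π μ γ lam r Q₂‖ ≤
        (1 - lam) * γ / (1 - lam * γ) * ‖Q₁ - Q₂‖) ∧
    (1 - lam) * γ / (1 - lam * γ) < 1 ∧
    ∃ Qmp : X × A → ℝ,
      Rgen P π μ γ lam r Qmp = Qmp ∧
      (∀ Q : X × A → ℝ, Rgen P π μ γ lam r Q = Q → Q = Qmp) ∧
      Qmp - (lam * γ) • Pop P μ Qmp - ((1 - lam) * γ) • Pop P π Qmp = r ∧
      (∀ Q : X × A → ℝ,
        Q - (lam * γ) • Pop P μ Q - ((1 - lam) * γ) • Pop P π Q = r → Q = Qmp) := by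
  -- basic numeric facts
  have hlg0 : 0 ≤ lam * γ := mul_nonneg hl0 hγ0
  have hlg1 : lam * γ < 1 := lt_of_le_of_lt (by nlinarith) hl1
  have h1lg : 0 < 1 - lam * γ := by linarith
  have hc0 : 0 ≤ (1 - lam) * γ := mul_nonneg (by linarith) hγ0
  set κ : ℝ := (1 - lam) * γ / (1 - lam * γ) with hκdef
  have hκ0 : 0 ≤ κ := div_nonneg hc0 h1lg.le
  have hκ1 : κ < 1 := by
    rw [hκdef, div_lt_one h1lg]; nlinarith
  -- summability of the defining series for any "source" g
  have hsum : ∀ g : X × A → ℝ, Summable (fun t : ℕ => (lam * γ) ^ t • (Pop P μ)^[t] g) := by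
    intro g
    apply Summable.of_norm_bounded (g := fun t : ℕ => (lam * γ) ^ t * ‖g‖)
      ((summable_geometric_of_lt_one hlg0 hlg1).mul_right _)
    intro t
    rw [norm_smul, Real.norm_of_nonneg (pow_nonneg hlg0 t)]
    exact mul_le_mul_of_nonneg_left (Pop_iter_norm_le P hP0 hP1 μ hμ0 hμ1 t g)
      (pow_nonneg hlg0 t)
  -- Part 1: contraction estimate
  have hcontr : ∀ Q₁ Q₂ : X × A → ℝ,
      ‖Rgen P π μ γ lam r Q₁ - Rgen P π μ γ lam r Q₂‖ ≤ κ * ‖Q₁ - Q₂‖ := by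
    intro Q₁ Q₂
    set g₁ := r + ((1 - lam) * γ) • Pop P π Q₁ with hg₁
    set g₂ := r + ((1 - lam) * γ) • Pop P π Q₂ with hg₂
    have hdiff : Rgen P π μ γ lam r Q₁ - Rgen P π μ γ lam r Q₂ =
        ∑' t : ℕ, (lam * γ) ^ t • (Pop P μ)^[t] (g₁ - g₂) := by
      rw [Rgen, Rgen, ← Summable.tsum_sub (hsum g₁) (hsum g₂)]
      congr 1; funext t
      rw [Pop_iter_sub, smul_sub]
    rw [hdiff]
    have hg : g₁ - g₂ = ((1 - lam) * γ) • Pop P π (Q₁ - Q₂) := by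
      rw [hg₁, hg₂, Pop_sub, smul_sub]; abel
    have hbound : ∀ t : ℕ, ‖(lam * γ) ^ t • (Pop P μ)^[t] (g₁ - g₂)‖ ≤
        (lam * γ) ^ t * ((1 - lam) * γ * ‖Q₁ - Q₂‖) := by
      intro t
      rw [norm_smul, Real.norm_of_nonneg (pow_nonneg hlg0 t)]
      refine mul_le_mul_of_nonneg_left ?_ (pow_nonneg hlg0 t)
      calc ‖(Pop P μ)^[t] (g₁ - g₂)‖ ≤ ‖g₁ - g₂‖ :=
            Pop_iter_norm_le P hP0 hP1 μ hμ0 hμ1 t _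
        _ ≤ (1 - lam) * γ * ‖Q₁ - Q₂‖ := by
            rw [hg, norm_smul, Real.norm_of_nonneg hc0]
            exact mul_le_mul_of_nonneg_left
              (Pop_norm_le P hP0 hP1 π hπ0 hπ1 _) hc0
    calc ‖∑' t : ℕ, (lam * γ) ^ t • (Pop P μ)^[t] (g₁ - g₂)‖
        ≤ ∑' t : ℕ, (lam * γ) ^ t * ((1 - lam) * γ * ‖Q₁ - Q₂‖) := by
          exact tsum_of_norm_bounded
            ((summable_geometric_of_lt_one hlg0 hlg1).mul_right _).hasSum hbound
      _ = (1 - lam * γ)⁻¹ * ((1 - lam) * γ * ‖Q₁ - Q₂‖) := by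
          rw [tsum_mul_right, tsum_geometric_of_lt_one hlg0 hlg1]
      _ = κ * ‖Q₁ - Q₂‖ := by rw [hκdef]; field_simp
  refine ⟨hcontr, hκ1, ?_⟩
  -- R has a fixed point via Banach
  set R : (X × A → ℝ) → (X × A → ℝ) := Rgen P π μ γ lam r with hR
  have hlips : LipschitzWith κ.toNNReal R := by
    apply LipschitzWith.of_dist_le_mul
    intro Q₁ Q₂
    rw [dist_eq_norm, dist_eq_norm, Real.coe_toNNReal κ hκ0]
    exact hcontr Q₁ Q₂
  have hCW : ContractingWith κ.toNNReal R := by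
    constructor
    · rw [← NNReal.coe_lt_coe, Real.coe_toNNReal κ hκ0]; exact hκ1
    · exact hlips
  set Qmp := hCW.fixedPoint R with hQmp
  have hfix : R Qmp = Qmp := hCW.fixedPoint_isFixedPt
  have huniqR : ∀ Q : X × A → ℝ, R Q = Q → Q = Qmp := fun Q hQ =>
    hCW.fixedPoint_unique hQ
  -- any fixed point of R satisfies the linear equation
  have hRfix_eq : ∀ Q : X × A → ℝ, R Q = Q →
      Q - (lam * γ) • Pop P μ Q - ((1 - lam) * γ) • Pop P π Q = r := by
    intro Q hQ
    set g := r + ((1 - lam) * γ) • Pop P π Q with hg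
    -- Pop P μ as a continuous linear map
    set L : (X × A → ℝ) →L[ℝ] (X × A → ℝ) :=
      LinearMap.mkContinuous (PopL P μ) 1
        (fun f => by rw [one_mul]; exact Pop_norm_le P hP0 hP1 μ hμ0 hμ1 f) with hL
    have hLPop : ∀ f, L f = Pop P μ f := fun f => rfl
    have hs' : Summable (fun t : ℕ => (lam * γ) ^ t • (Pop P μ)^[t+1] g) := by
      apply Summable.of_norm_bounded (g := fun t : ℕ => (lam * γ) ^ t * ‖g‖)
        ((summable_geometric_of_lt_one hlg0 hlg1).mul_right _)
      intro t
      rw [norm_smul, Real.norm_of_nonneg (pow_nonneg hlg0 t)]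
      exact mul_le_mul_of_nonneg_left (Pop_iter_norm_le P hP0 hP1 μ hμ0 hμ1 (t+1) g)
        (pow_nonneg hlg0 t)
    have key : R Q = g + (lam * γ) • Pop P μ (R Q) := by
      have h1 : Pop P μ (R Q) = ∑' t : ℕ, (lam * γ) ^ t • (Pop P μ)^[t+1] g := by
        rw [← hLPop, hR, Rgen, ← hg, L.map_tsum (hsum g)]
        congr 1; funext t
        rw [map_smul, hLPop, ← Function.iterate_succ_apply' (Pop P μ) t g]
      have h2 : (lam * γ) • Pop P μ (R Q) =
          ∑' t : ℕ, (lam * γ) ^ (t + 1) • (Pop P μ)^[t+1] g := by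
        rw [h1, ← Summable.tsum_const_smul (lam * γ) hs']
        congr 1; funext t
        rw [smul_smul, ← pow_succ']
      have h3 : R Q = (lam * γ) ^ 0 • (Pop P μ)^[0] g +
          ∑' t : ℕ, (lam * γ) ^ (t + 1) • (Pop P μ)^[t+1] g := by
        rw [hR, Rgen, ← hg]
        exact Summable.tsum_eq_zero_add (hsum g)
      rw [h2, h3]
      simp
    rw [hQ] at key
    rw [hg] at key
    -- key : Q = (r + c • Pop π Q) + (λγ) • Pop μ Q
    have h4 := congrArg
      (fun z : X × A → ℝ => z - (lam * γ) • Pop P μ Q - ((1 - lam) * γ) • Pop P π Q) key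
    rw [h4]
    abel
  have heq : Qmp - (lam * γ) • Pop P μ Qmp - ((1 - lam) * γ) • Pop P π Qmp = r :=
    hRfix_eq Qmp hfix
  refine ⟨Qmp, hfix, huniqR, heq, ?_⟩
  -- uniqueness of solutions of the linear equation
  intro Q hQ
  have hd : Q - Qmp = (lam * γ) • Pop P μ (Q - Qmp) + ((1 - lam) * γ) • Pop P π (Q - Qmp) := by
    rw [Pop_sub, Pop_sub, smul_sub, smul_sub]
    have h1 : Q = r + (lam * γ) • Pop P μ Q + ((1 - lam) * γ) • Pop P π Q := by
      rw [← hQ]; abel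
    have h2 : Qmp = r + (lam * γ) • Pop P μ Qmp + ((1 - lam) * γ) • Pop P π Qmp := by
      rw [← heq]; abel
    calc Q - Qmp = (r + (lam * γ) • Pop P μ Q + ((1 - lam) * γ) • Pop P π Q) -
        (r + (lam * γ) • Pop P μ Qmp + ((1 - lam) * γ) • Pop P π Qmp) := by
          rw [← h1, ← h2]
      _ = _ := by abel
  have hnorm : ‖Q - Qmp‖ ≤ γ * ‖Q - Qmp‖ := by
    calc ‖Q - Qmp‖ = ‖(lam * γ) • Pop P μ (Q - Qmp) + ((1 - lam) * γ) • Pop P π (Q - Qmp)‖ := by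
          rw [← hd]
      _ ≤ ‖(lam * γ) • Pop P μ (Q - Qmp)‖ + ‖((1 - lam) * γ) • Pop P π (Q - Qmp)‖ :=
          norm_add_le _ _
      _ ≤ (lam * γ) * ‖Q - Qmp‖ + ((1 - lam) * γ) * ‖Q - Qmp‖ := by
          gcongr
          · rw [norm_smul, Real.norm_of_nonneg hlg0]
            exact mul_le_mul_of_nonneg_left (Pop_norm_le P hP0 hP1 μ hμ0 hμ1 _) hlg0
          · rw [norm_smul, Real.norm_of_nonneg hc0]
            exact mul_le_mul_of_nonneg_left (Pop_norm_le P hP0 hP1 π hπ0 hπ1 _) hc0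
      _ = γ * ‖Q - Qmp‖ := by ring
  have : ‖Q - Qmp‖ ≤ 0 := by nlinarith [norm_nonneg (Q - Qmp)]
  have : Q - Qmp = 0 := norm_le_zero_iff.mp this
  exact sub_eq_zero.mp this
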